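/- Let X be a normed quasi-algebra that contains at least one singular element (i.e., X is not a linear space). Then for every x ∈ X there exists a sequence x₁, x₂, x₃, … in X such that x ≤ x₁ ≤ x₂ ≤ x₃ ≤ ⋯ with all the inequalities strict (x ≠ x₁, x₁ ≠ x₂, x₂ ≠ x₃, …). -/
import Mathlib


/-- A quasi-algebra in the sense of Aseev/Dehghanizade–Modarres: a partially
ordered set with addition, zero, real scalar multiplication and a product. -/
structure QuasiAlgebra (X : Type*) [PartialOrder X] where
  add : X → X → X
  zero : X
  smul : ℝ → X → X
  mul : X → X → X
  add_comm : ∀ x y, add x y = add y x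
  add_assoc : ∀ x y z, add x (add y z) = add (add x y) z
  add_zero : ∀ x, add x zero = x
  smul_smul : ∀ (α β : ℝ) (x : X), smul α (smul β x) = smul (α * β) x
  smul_add : ∀ (α : ℝ) (x y : X), smul α (add x y) = add (smul α x) (smul α y)
  one_smul : ∀ x, smul 1 x = x
  zero_smul : ∀ x, smul 0 x = zero
  add_smul_le : ∀ (α β : ℝ) (x : X), smul (α + β) x ≤ add (smul α x) (smul β x)
  add_le_add : ∀ {x y z v : X}, x ≤ y → z ≤ v → add x z ≤ add y v
  smul_le_smul : ∀ (α : ℝ) {x y : X}, x ≤ y → smul α x ≤ smul α y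
  mul_assoc : ∀ x y z, mul x (mul y z) = mul (mul x y) z
  smul_mul : ∀ (α : ℝ) (x y : X), smul α (mul x y) = mul (smul α x) y
  mul_smul : ∀ (α : ℝ) (x y : X), smul α (mul x y) = mul x (smul α y)
  zero_mul_zero : mul zero zero = zero
  mul_add_le : ∀ x y z, mul x (add y z) ≤ add (mul x y) (mul x z)
  add_mul_le : ∀ x y z, mul (add x y) z ≤ add (mul x z) (mul y z)
  mul_le_mul : ∀ {x y z v : X}, x ≤ y → z ≤ v → mul x z ≤ mul y v

namespace QuasiAlgebra

variable {X : Type*} [PartialOrder X]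

/-- `-x = (-1)·x`. -/
def neg (Q : QuasiAlgebra X) (x : X) : X := Q.smul (-1) x

/-- `x - y = x + (-y)`. -/
def sub (Q : QuasiAlgebra X) (x y : X) : X := Q.add x (Q.neg y)

/-- An element is regular if it has an additive inverse. -/
def Regular (Q : QuasiAlgebra X) (x : X) : Prop := ∃ x' : X, Q.add x x' = Q.zero

/-- A norm on a quasi-algebra. -/
structure Norm (Q : QuasiAlgebra X) where
  norm : X → ℝ
  norm_pos : ∀ {x : X}, x ≠ Q.zero → 0 < norm x
  norm_add : ∀ x y, norm (Q.add x y) ≤ norm x + norm y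
  norm_smul : ∀ (α : ℝ) (x : X), norm (Q.smul α x) = |α| * norm x
  norm_mul : ∀ x y, norm (Q.mul x y) ≤ norm x * norm y
  norm_mono : ∀ {x y : X}, x ≤ y → norm x ≤ norm y
  le_of_forall_eps : ∀ {x y : X},
    (∀ ε : ℝ, 0 < ε → ∃ z : X, x ≤ Q.add y z ∧ norm z ≤ ε) → x ≤ y

/-- The Hausdorff metric of a normed quasi-algebra. -/
noncomputable def hmet (Q : QuasiAlgebra X) (N : Q.Norm) (x y : X) : ℝ :=
  sInf {r : ℝ | 0 ≤ r ∧ ∃ a₁ a₂ : X,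
    x ≤ Q.add y a₁ ∧ y ≤ Q.add x a₂ ∧ N.norm a₁ ≤ r ∧ N.norm a₂ ≤ r}

end QuasiAlgebra


namespace QuasiAlgebraAux

variable {X : Type*} [PartialOrder X]

lemma zero_le_add_neg (Q : QuasiAlgebra X) (b : X) :
    Q.zero ≤ Q.add b (Q.neg b) := by
  have h := Q.add_smul_le 1 (-1) b
  have h1 : (1 : ℝ) + (-1) = 0 := by ring
  rw [h1, Q.zero_smul, Q.one_smul] at h
  exact h

/-- k+1 copies of d summed. -/
def iter (Q : QuasiAlgebra X) (d : X) : ℕ → X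
  | 0 => d
  | n + 1 => Q.add (iter Q d n) d

lemma smul_le_iter (Q : QuasiAlgebra X) (d : X) :
    ∀ k : ℕ, Q.smul ((k + 1 : ℕ) : ℝ) d ≤ iter Q d k := by
  intro k
  induction k with
  | zero => simp [iter, Q.one_smul]
  | succ n ih =>
      have e : ((n + 2 : ℕ) : ℝ) = ((n + 1 : ℕ) : ℝ) + 1 := by push_cast; ring
      have h := Q.add_smul_le ((n + 1 : ℕ) : ℝ) 1 d
      rw [← e, Q.one_smul] at h
      calc Q.smul ((n + 1 + 1 : ℕ) : ℝ) d ≤ Q.add (Q.smul ((n + 1 : ℕ) : ℝ) d) d := h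
        _ ≤ Q.add (iter Q d n) d := Q.add_le_add ih le_rfl
        _ = iter Q d (n + 1) := rfl

lemma no_absorb (Q : QuasiAlgebra X) (N : Q.Norm) {d y : X}
    (hd : d ≠ Q.zero) (h : Q.add y d = y) : False := by
  have hiter : ∀ k, Q.add y (iter Q d k) = y := by
    intro k
    induction k with
    | zero => exact h
    | succ n ih =>
        show Q.add y (Q.add (iter Q d n) d) = y
        rw [Q.add_assoc, ih, h]
  have hdn : 0 < N.norm d := N.norm_pos hd
  have key : ∀ k : ℕ, ((k + 1 : ℕ) : ℝ) * N.norm d ≤ 2 * N.norm y := by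
    intro k
    set a := Q.smul ((k + 1 : ℕ) : ℝ) d with ha
    have hya : Q.add y a ≤ y := by
      calc Q.add y a ≤ Q.add y (iter Q d k) := Q.add_le_add le_rfl (smul_le_iter Q d k)
        _ = y := hiter k
    have hay : Q.add a y ≤ y := by rw [Q.add_comm]; exact hya
    have hrev : a ≤ Q.add (Q.add a y) (Q.neg y) := by
      calc a = Q.add a Q.zero := (Q.add_zero a).symm
        _ ≤ Q.add a (Q.add y (Q.neg y)) := Q.add_le_add le_rfl (zero_le_add_neg Q y)
        _ = Q.add (Q.add a y) (Q.neg y) := Q.add_assoc a y (Q.neg y)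
    have h1 : N.norm a ≤ N.norm (Q.add a y) + N.norm (Q.neg y) :=
      le_trans (N.norm_mono hrev) (N.norm_add _ _)
    have h2 : N.norm (Q.neg y) = N.norm y := by
      show N.norm (Q.smul (-1) y) = N.norm y
      rw [N.norm_smul]; simp
    have h3 : N.norm (Q.add a y) ≤ N.norm y := N.norm_mono hay
    have h4 : N.norm a = ((k + 1 : ℕ) : ℝ) * N.norm d := by
      rw [ha, N.norm_smul, abs_of_nonneg (by positivity)]
    linarith
  obtain ⟨k, hk⟩ := exists_nat_gt (2 * N.norm y / N.norm d)
  have hk' := key k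
  have : ((k + 1 : ℕ) : ℝ) * N.norm d > 2 * N.norm y := by
    have : (k : ℝ) * N.norm d > 2 * N.norm y := by
      rw [gt_iff_lt, ← div_lt_iff₀ hdn] at *
      exact hk
    have hkk : ((k + 1 : ℕ) : ℝ) * N.norm d ≥ (k : ℝ) * N.norm d := by
      push_cast; nlinarith
    linarith
  linarith

end QuasiAlgebraAux

/-- in a normed quasi-algebra containing a singular element,
above every element there is a strictly increasing chain. -/
theorem stmt_9 {X : Type*} [PartialOrder X] (Q : QuasiAlgebra X) (N : Q.Norm)
    (hs : ∃ s : X, ¬ Q.Regular s) (x : X) :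
    ∃ f : ℕ → X, (x ≤ f 0 ∧ x ≠ f 0) ∧
      ∀ n : ℕ, f n ≤ f (n + 1) ∧ f n ≠ f (n + 1) := by
  obtain ⟨s, hs⟩ := hs
  set d := Q.add s (Q.neg s) with hd
  have hd0 : Q.zero ≤ d := QuasiAlgebraAux.zero_le_add_neg Q s
  have hdne : d ≠ Q.zero := fun h => hs ⟨Q.neg s, h⟩
  refine ⟨fun n => Q.add x (QuasiAlgebraAux.iter Q d n), ⟨?_, ?_⟩, ?_⟩
  · calc x = Q.add x Q.zero := (Q.add_zero x).symm
      _ ≤ Q.add x d := Q.add_le_add le_rfl hd0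
  · intro h
    exact QuasiAlgebraAux.no_absorb Q N hdne h.symm
  · intro n
    dsimp only
    have heq : Q.add x (QuasiAlgebraAux.iter Q d (n + 1))
        = Q.add (Q.add x (QuasiAlgebraAux.iter Q d n)) d := by
      show Q.add x (Q.add (QuasiAlgebraAux.iter Q d n) d) = _
      rw [Q.add_assoc]
    constructor
    · rw [heq]
      calc Q.add x (QuasiAlgebraAux.iter Q d n)
          = Q.add (Q.add x (QuasiAlgebraAux.iter Q d n)) Q.zero := (Q.add_zero _).symm
        _ ≤ Q.add (Q.add x (QuasiAlgebraAux.iter Q d n)) d := Q.add_le_add le_rfl hd0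
    · rw [heq]
      intro h
      exact QuasiAlgebraAux.no_absorb Q N hdne h.symm
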